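/- General q-state correlation-connectivity identity: for the q-state Potts model with fields ĥ = (h_{i,p}) on a finite graph G, at inverse temperature qβ, and p_{ij}=1-exp(-qβJ_{ij}), one has τ_{qβ,ĥ,q,V}(x,y) = (1 - 1/q) φ_{p,ĥ,q,G}(x ↔ y) + φ_{p,ĥ,q,G}(1_{{x ↮ y}} · (H_ĥ(K_t,K_u) - 1/q)), where H_ĥ(K_t,K_u) = [Σ_{r=1}^q exp(β Σ_{i∈K_t}h_{i,r} + β Σ_{i∈K_u}h_{i,r})] / ([Σ_{r=1}^q exp(β Σ_{i∈K_t}h_{i,r})]·[Σ_{r=1}^q exp(β Σ_{i∈K_u}h_{i,r})]). -/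

import Mathlib

open Finset

noncomputable section

variable {V : Type}

/-- The spin value (±1) attached to a Boolean spin (`true ↔ +1`, `false ↔ -1`). -/
def spin (b : Bool) : ℝ := if b then 1 else -1

/-- The subgraph of `G` whose open edges are the edges in `F`. -/
def openSub (G : SimpleGraph V) (F : Finset (Sym2 V)) : SimpleGraph V where
  Adj i j := G.Adj i j ∧ s(i, j) ∈ F
  symm := by
    constructor
    intro i j h
    exact ⟨h.1.symm, by rw [Sym2.eq_swap]; exact h.2⟩
  loopless := ⟨fun i h => G.loopless.irrefl i h.1⟩

instance [Fintype V] (H : SimpleGraph V) : Fintype H.ConnectedComponent := by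
  classical exact Fintype.ofSurjective H.connectedComponentMk Quot.exists_rep

/-- The vertex set of a connected component, as a `Finset`. -/
def compSupp [Fintype V] (H : SimpleGraph V) (c : H.ConnectedComponent) : Finset V := by
  classical exact Finset.univ.filter fun v => H.connectedComponentMk v = c

/-- Kronecker delta `δ_{σ_i,σ_j}` of a configuration on an (unordered) edge. -/
def eDelta {S : Type} [DecidableEq S] (σ : V → S) : Sym2 V → ℝ :=
  Sym2.lift ⟨fun i j => if σ i = σ j then 1 else 0, fun _ _ => by simp [eq_comm]⟩

/-- Product of spins `σ_i σ_j` on an (unordered) edge. -/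
def eProd (σ : V → Bool) : Sym2 V → ℝ :=
  Sym2.lift ⟨fun i j => spin (σ i) * spin (σ j), fun _ _ => mul_comm _ _⟩

/-- The consistency indicator `Δ(σ,ω)`: equal to `1` iff `σ` is constant on
every open edge of the configuration `F`. -/
def Delta (G : SimpleGraph V) (F : Finset (Sym2 V)) (σ : V → Bool) : ℝ := by
  classical exact if ∀ i j, G.Adj i j → s(i, j) ∈ F → σ i = σ j then 1 else 0

/-- The Bernoulli factor `B_J(ω) = ∏_{e open} p_e ∏_{e closed} (1-p_e)`. -/
def bern [Fintype V] [DecidableEq V] (G : SimpleGraph V) [DecidableRel G.Adj]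
    (p : Sym2 V → ℝ) (F : Finset (Sym2 V)) : ℝ :=
  (∏ e ∈ F, p e) * ∏ e ∈ G.edgeFinset \ F, (1 - p e)

/-- The (unnormalized) `q`-state Potts Boltzmann weight at inverse temperature
`qβ`, with fields `ĥ = (h i r)`. -/
def pottsWq [Fintype V] [DecidableEq V] (G : SimpleGraph V) [DecidableRel G.Adj]
    (q : ℕ) (β : ℝ) (J : Sym2 V → ℝ) (hh : V → Fin q → ℝ) (τ : V → Fin q) : ℝ :=
  Real.exp (-(q * β) *
    (-(∑ e ∈ G.edgeFinset, J e * eDelta τ e)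
      - ∑ r : Fin q, ∑ i, hh i r / q * (if τ i = r then 1 else 0)))

/-- The general random-cluster weight
`B_{J,q}(ω) ∏_α Σ_{p=1}^q exp(β Σ_{i∈K_α} h_{i,p})`. -/
def grcW [Fintype V] [DecidableEq V] (G : SimpleGraph V) [DecidableRel G.Adj]
    (q : ℕ) (β : ℝ) (p : Sym2 V → ℝ) (hh : V → Fin q → ℝ) (F : Finset (Sym2 V)) : ℝ :=
  bern G p F * ∏ c : (openSub G F).ConnectedComponent,
    ∑ r : Fin q, Real.exp (β * ∑ i ∈ compSupp (openSub G F) c, hh i r)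

/-- Expectation of `f` under the general random-cluster measure. -/
def grcE [Fintype V] [DecidableEq V] (G : SimpleGraph V) [DecidableRel G.Adj]
    (q : ℕ) (β : ℝ) (p : Sym2 V → ℝ) (hh : V → Fin q → ℝ)
    (f : Finset (Sym2 V) → ℝ) : ℝ :=
  (∑ F ∈ G.edgeFinset.powerset, f F * grcW G q β p hh F) /
    ∑ F ∈ G.edgeFinset.powerset, grcW G q β p hh F

/-- The component of `z` in the configuration `F`, as a `Finset`. -/
def Kcomp [Fintype V] [DecidableEq V] (G : SimpleGraph V) (F : Finset (Sym2 V))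
    (z : V) : Finset V :=
  compSupp (openSub G F) ((openSub G F).connectedComponentMk z)

/-- The random variable `H_ĥ(K_t,K_u)` of the two components `K_t ∋ x`, `K_u ∋ y`. -/
def Hfun [Fintype V] [DecidableEq V] (G : SimpleGraph V) (q : ℕ) (β : ℝ)
    (hh : V → Fin q → ℝ) (F : Finset (Sym2 V)) (x y : V) : ℝ :=
  (∑ r : Fin q, Real.exp (β * ∑ i ∈ Kcomp G F x, hh i r
      + β * ∑ i ∈ Kcomp G F y, hh i r)) /
    ((∑ r : Fin q, Real.exp (β * ∑ i ∈ Kcomp G F x, hh i r)) *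
      ∑ r : Fin q, Real.exp (β * ∑ i ∈ Kcomp G F y, hh i r))

section Aux
open scoped Classical

variable [Fintype V] [DecidableEq V]

lemma mem_compSupp {H : SimpleGraph V} {c : H.ConnectedComponent} {i : V} :
    i ∈ compSupp H c ↔ H.connectedComponentMk i = c := by
  simp [compSupp]

lemma compat_of_reachable {q : ℕ} {H : SimpleGraph V} {τ : V → Fin q}
    (hc : ∀ i j, H.Adj i j → τ i = τ j) {v w : V} (h : H.Reachable v w) :
    τ v = τ w := by
  obtain ⟨p⟩ := h
  induction p with
  | nil => rfl
  | cons h p ih => exact (hc _ _ h).trans ih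

lemma prod_comp_eq {q : ℕ} (H : SimpleGraph V) (w : V → Fin q → ℝ)
    (g : H.ConnectedComponent → Fin q) :
    ∏ c, ∏ i ∈ compSupp H c, w i (g c) = ∏ i, w i (g (H.connectedComponentMk i)) := by
  rw [← Finset.prod_fiberwise Finset.univ (fun v => H.connectedComponentMk v)
    (fun i => w i (g (H.connectedComponentMk i)))]
  refine Finset.prod_congr rfl fun c _ => ?_
  refine Finset.prod_congr ?_ fun i hi => ?_
  · ext i; simp [mem_compSupp]
  · simp only [Finset.mem_filter] at hi
    rw [hi.2]

lemma sum_compat {q : ℕ} (H : SimpleGraph V) (w : V → Fin q → ℝ)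
    [D : DecidablePred (fun τ : V → Fin q => ∀ i j, H.Adj i j → τ i = τ j)] :
    ∑ τ ∈ @Finset.filter (V → Fin q)
        (fun τ : V → Fin q => ∀ i j, H.Adj i j → τ i = τ j) D Finset.univ,
        ∏ i, w i (τ i)
    = ∏ c : H.ConnectedComponent, ∑ r, ∏ i ∈ compSupp H c, w i r := by
  rw [Finset.prod_univ_sum, Fintype.piFinset_univ]
  refine Finset.sum_bij' (fun τ _ => fun c => τ c.out)
    (fun g _ => fun v => g (H.connectedComponentMk v)) ?_ ?_ ?_ ?_ ?_
  · intro τ hτ; exact Finset.mem_univ _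
  · intro g hg
    simp only [Finset.mem_filter, Finset.mem_univ, true_and]
    intro i j hij
    rw [SimpleGraph.ConnectedComponent.connectedComponentMk_eq_of_adj hij]
  · intro τ hτ
    simp only [Finset.mem_filter, Finset.mem_univ, true_and] at hτ
    funext v
    exact (compat_of_reachable hτ (SimpleGraph.ConnectedComponent.exact
      (Quot.out_eq (H.connectedComponentMk v)).symm)).symm
  · intro g hg
    funext c
    show g (H.connectedComponentMk (Quot.out c)) = g c
    exact congrArg g (Quot.out_eq c)
  · intro τ hτ
    rw [prod_comp_eq]
    refine Finset.prod_congr rfl fun i _ => ?_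
    simp only [Finset.mem_filter, Finset.mem_univ, true_and] at hτ
    congr 1
    exact compat_of_reachable hτ (SimpleGraph.ConnectedComponent.exact
      (Quot.out_eq (H.connectedComponentMk i)).symm)

end Aux
section Aux2
open scoped Classical

variable [Fintype V] [DecidableEq V]

lemma sum_compat_con {q : ℕ} (H : SimpleGraph V) (w : V → Fin q → ℝ) {x y : V}
    (hne : H.connectedComponentMk x ≠ H.connectedComponentMk y)
    [D : DecidablePred (fun τ : V → Fin q =>
        (∀ i j, H.Adj i j → τ i = τ j) ∧ τ x = τ y)] :
    ∑ τ ∈ @Finset.filter (V → Fin q) (fun τ : V → Fin q =>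
        (∀ i j, H.Adj i j → τ i = τ j) ∧ τ x = τ y) D Finset.univ, ∏ i, w i (τ i)
    = (∑ r, (∏ i ∈ compSupp H (H.connectedComponentMk x), w i r) *
          ∏ i ∈ compSupp H (H.connectedComponentMk y), w i r) *
      ∏ c ∈ Finset.univ \ {H.connectedComponentMk x, H.connectedComponentMk y},
        ∑ r, ∏ i ∈ compSupp H c, w i r := by
  set cx := H.connectedComponentMk x with hcx
  set cy := H.connectedComponentMk y with hcy
  set f : H.ConnectedComponent → Fin q → ℝ := fun c r => ∏ i ∈ compSupp H c, w i r with hf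
  have hreach : ∀ v : V, H.Reachable v (Quot.out (H.connectedComponentMk v)) :=
    fun v => SimpleGraph.ConnectedComponent.exact (Quot.out_eq (H.connectedComponentMk v)).symm
  -- Step A: reindex to functions on components
  have stepA : ∑ τ ∈ Finset.univ.filter (fun τ : V → Fin q =>
        (∀ i j, H.Adj i j → τ i = τ j) ∧ τ x = τ y), ∏ i, w i (τ i)
      = ∑ g ∈ Finset.univ.filter (fun g : H.ConnectedComponent → Fin q => g cx = g cy),
          ∏ c, f c (g c) := by
    refine Finset.sum_bij' (fun τ _ => fun c => τ c.out)
      (fun g _ => fun v => g (H.connectedComponentMk v)) ?_ ?_ ?_ ?_ ?_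
    · intro τ hτ
      simp only [Finset.mem_filter, Finset.mem_univ, true_and] at hτ ⊢
      calc τ (Quot.out cx) = τ x := (compat_of_reachable hτ.1 (hreach x)).symm
        _ = τ y := hτ.2
        _ = τ (Quot.out cy) := compat_of_reachable hτ.1 (hreach y)
    · intro g hg
      simp only [Finset.mem_filter, Finset.mem_univ, true_and] at hg ⊢
      constructor
      · intro i j hij
        rw [SimpleGraph.ConnectedComponent.connectedComponentMk_eq_of_adj hij]
      · exact hg
    · intro τ hτ
      simp only [Finset.mem_filter, Finset.mem_univ, true_and] at hτ
      funext v
      exact (compat_of_reachable hτ.1 (hreach v)).symm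
    · intro g hg
      funext c
      show g (H.connectedComponentMk (Quot.out c)) = g c
      exact congrArg g (Quot.out_eq c)
    · intro τ hτ
      simp only [Finset.mem_filter, Finset.mem_univ, true_and] at hτ
      rw [prod_comp_eq]
      refine Finset.prod_congr rfl fun i _ => ?_
      congr 1
      exact compat_of_reachable hτ.1 (hreach i)
  rw [stepA]
  -- Step B: indicator form
  rw [Finset.sum_filter]
  have hind : ∀ g : H.ConnectedComponent → Fin q,
      (if g cx = g cy then ∏ c, f c (g c) else 0)
      = ∑ r, ((if g cx = r then (1:ℝ) else 0) * (if g cy = r then 1 else 0))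
          * ∏ c, f c (g c) := by
    intro g
    have hsplit1 : (if g cx = g cy then ∏ c, f c (g c) else 0)
        = (if g cx = g cy then (1:ℝ) else 0) * ∏ c, f c (g c) := by
      by_cases h : g cx = g cy <;> simp [h]
    rw [hsplit1, ← Finset.sum_mul]
    congr 1
    by_cases h : g cx = g cy
    · rw [if_pos h, h]
      simp
    · rw [if_neg h]
      symm
      refine Finset.sum_eq_zero fun r _ => ?_
      by_cases h1 : g cx = r
      · have h2 : ¬ g cy = r := fun h2 => h (h1.trans h2.symm)
        simp [h2]
      · simp [h1]
  rw [Finset.sum_congr rfl fun g _ => hind g]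
  rw [show (∑ g : H.ConnectedComponent → Fin q, ∑ r : Fin q,
      ((if g cx = r then (1:ℝ) else 0) * (if g cy = r then 1 else 0)) * ∏ c, f c (g c))
    = ∑ r : Fin q, ∑ g : H.ConnectedComponent → Fin q,
      ((if g cx = r then (1:ℝ) else 0) * (if g cy = r then 1 else 0)) * ∏ c, f c (g c)
    from Finset.sum_comm]
  -- Step C: per-r factorization
  have stepC : ∀ r : Fin q, ∑ g : H.ConnectedComponent → Fin q,
      ((if g cx = r then (1:ℝ) else 0) * (if g cy = r then 1 else 0)) * ∏ c, f c (g c)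
      = (f cx r * f cy r) *
        ∏ c ∈ Finset.univ \ {cx, cy}, ∑ s, f c s := by
    intro r
    set Fr : H.ConnectedComponent → Fin q → ℝ := fun c s =>
      (if c = cx then (if s = r then (1:ℝ) else 0)
        else if c = cy then (if s = r then 1 else 0) else 1) * f c s with hFr
    have h1 : ∀ g : H.ConnectedComponent → Fin q,
        ((if g cx = r then (1:ℝ) else 0) * (if g cy = r then 1 else 0)) * ∏ c, f c (g c)
        = ∏ c, Fr c (g c) := by
      intro g
      rw [hFr]
      simp only []
      rw [Finset.prod_mul_distrib]
      congr 1
      have hsub : ∏ c, (if c = cx then (if g c = r then (1:ℝ) else 0)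
          else if c = cy then (if g c = r then 1 else 0) else 1)
          = ∏ c ∈ ({cx, cy} : Finset H.ConnectedComponent),
            (if c = cx then (if g c = r then (1:ℝ) else 0)
              else if c = cy then (if g c = r then 1 else 0) else 1) := by
        refine (Finset.prod_subset (Finset.subset_univ _) fun c _ hc => ?_).symm
        simp only [Finset.mem_insert, Finset.mem_singleton, not_or] at hc
        rw [if_neg hc.1, if_neg hc.2]
      rw [hsub, Finset.prod_pair hne]
      rw [if_pos rfl, if_neg (Ne.symm hne), if_pos rfl]
    rw [Finset.sum_congr rfl fun g _ => h1 g]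
    rw [← Fintype.piFinset_univ, ← Finset.prod_univ_sum]
    have h2 : ∀ c : H.ConnectedComponent, ∑ s, Fr c s
        = if c = cx then f cx r else if c = cy then f cy r else ∑ s, f c s := by
      intro c
      by_cases h3 : c = cx
      · subst h3
        rw [if_pos rfl, hFr]
        simp only [if_pos rfl]
        simp [ite_mul]
      · by_cases h4 : c = cy
        · subst h4
          rw [if_neg h3, if_pos rfl, hFr]
          simp only [if_neg h3, if_pos rfl]
          simp [ite_mul]
        · rw [if_neg h3, if_neg h4, hFr]
          simp only [if_neg h3, if_neg h4, one_mul]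
    rw [Finset.prod_congr rfl (fun c _ => h2 c)]
    rw [← Finset.prod_sdiff (Finset.subset_univ ({cx, cy} : Finset H.ConnectedComponent))]
    rw [Finset.prod_pair hne, if_pos rfl, if_neg (Ne.symm hne), if_pos rfl, mul_comm]
    congr 1
    refine Finset.prod_congr rfl fun c hc => ?_
    simp only [Finset.mem_sdiff, Finset.mem_insert, Finset.mem_singleton, not_or] at hc
    rw [if_neg hc.2.1, if_neg hc.2.2]
  simp_rw [stepC]
  rw [← Finset.sum_mul]

end Aux2
section Aux3
open scoped Classical

variable [Fintype V] [DecidableEq V]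

lemma eDelta_mk {q : ℕ} (τ : V → Fin q) (i j : V) :
    eDelta τ s(i, j) = if τ i = τ j then 1 else 0 := rfl

lemma delta_indicator {q : ℕ} (G : SimpleGraph V) [DecidableRel G.Adj]
    {F : Finset (Sym2 V)} (hF : F ⊆ G.edgeFinset) (τ : V → Fin q) :
    ∏ e ∈ F, eDelta τ e
      = if ∀ i j, (openSub G F).Adj i j → τ i = τ j then 1 else 0 := by
  by_cases h : ∀ i j, (openSub G F).Adj i j → τ i = τ j
  · rw [if_pos h]
    refine Finset.prod_eq_one fun e he => ?_
    induction e using Sym2.ind with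
    | _ i j =>
      have adj : G.Adj i j := by
        simpa [SimpleGraph.mem_edgeFinset] using hF he
      have := h i j ⟨adj, he⟩
      simp [eDelta_mk, this]
  · rw [if_neg h]
    push_neg at h
    obtain ⟨i, j, hij, hne⟩ := h
    refine Finset.prod_eq_zero hij.2 ?_
    simp [eDelta_mk, hne]

lemma grcW_eq {q : ℕ} (G : SimpleGraph V) [DecidableRel G.Adj] (β : ℝ)
    (p : Sym2 V → ℝ) (hh : V → Fin q → ℝ) (F : Finset (Sym2 V)) :
    grcW G q β p hh F = bern G p F * ∏ c : (openSub G F).ConnectedComponent,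
      ∑ r, ∏ i ∈ compSupp (openSub G F) c, Real.exp (β * hh i r) := by
  unfold grcW
  congr 1
  refine Finset.prod_congr rfl fun c _ => Finset.sum_congr rfl fun r _ => ?_
  rw [Finset.mul_sum, Real.exp_sum]

lemma pottsW_expand (G : SimpleGraph V) [DecidableRel G.Adj]
    {q : ℕ} (hq : 2 ≤ q) (β : ℝ) (J : Sym2 V → ℝ) (hh : V → Fin q → ℝ)
    (p : Sym2 V → ℝ) (hp : ∀ e, p e = 1 - Real.exp (-(q * β) * J e))
    (τ : V → Fin q) :
    pottsWq G q β J hh τ = (∏ e ∈ G.edgeFinset, (1 - p e)⁻¹) *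
      ∑ F ∈ G.edgeFinset.powerset,
        (bern G p F * ∏ e ∈ F, eDelta τ e) * ∏ i, Real.exp (β * hh i (τ i)) := by
  have hq0 : (q : ℝ) ≠ 0 := by
    have : 0 < q := lt_of_lt_of_le (by norm_num) hq
    exact_mod_cast this.ne'
  -- rewrite the exponent
  have hexp : pottsWq G q β J hh τ
      = Real.exp ((q * β) * ∑ e ∈ G.edgeFinset, J e * eDelta τ e) *
        ∏ i, Real.exp (β * hh i (τ i)) := by
    unfold pottsWq
    rw [← Real.exp_sum, ← Real.exp_add]
    congr 1
    have hB : ∑ r : Fin q, ∑ i, hh i r / q * (if τ i = r then 1 else 0)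
        = ∑ i, hh i (τ i) / q := by
      rw [Finset.sum_comm]
      refine Finset.sum_congr rfl fun i _ => ?_
      simp [mul_ite, Finset.sum_ite_eq]
    rw [hB, ← Finset.mul_sum, ← Finset.sum_div]
    field_simp
    ring
  rw [hexp]
  -- per-edge factorization
  have hedge : ∀ e ∈ G.edgeFinset,
      Real.exp ((q * β) * (J e * eDelta τ e))
      = (1 - p e)⁻¹ * (p e * eDelta τ e + (1 - p e)) := by
    intro e _
    have h1p : 1 - p e = Real.exp (-(q * β) * J e) := by rw [hp]; ring
    have hpos : (0:ℝ) < 1 - p e := h1p ▸ Real.exp_pos _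
    have hδ : eDelta τ e = 0 ∨ eDelta τ e = 1 := by
      induction e using Sym2.ind with
      | _ i j =>
        rw [eDelta_mk]
        by_cases h : τ i = τ j <;> simp [h]
    rcases hδ with h | h
    · rw [h]
      simp only [mul_zero, Real.exp_zero, zero_add]
      rw [inv_mul_cancel₀ hpos.ne']
    · rw [h]
      simp only [mul_one]
      have h2 : p e + (1 - p e) = 1 := by ring
      rw [h2, mul_one, h1p, ← Real.exp_neg]
      congr 1
      ring
  rw [Finset.mul_sum, Real.exp_sum]
  rw [Finset.prod_congr rfl hedge, Finset.prod_mul_distrib, Finset.prod_add]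
  rw [mul_assoc, Finset.sum_mul]
  congr 1
  refine Finset.sum_congr rfl fun F hF => ?_
  rw [Finset.mem_powerset] at hF
  unfold bern
  rw [Finset.prod_mul_distrib]
  ring

end Aux3
section Aux4
open scoped Classical

variable [Fintype V] [DecidableEq V]

lemma Spos {q : ℕ} (hq : 2 ≤ q) (β : ℝ) (hh : V → Fin q → ℝ)
    (s : Finset V) : 0 < ∑ r : Fin q, Real.exp (β * ∑ i ∈ s, hh i r) := by
  have : NeZero q := ⟨by omega⟩
  exact Finset.sum_pos (fun r _ => Real.exp_pos _) Finset.univ_nonempty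

lemma bern_mul_full {q : ℕ} (G : SimpleGraph V) [DecidableRel G.Adj] (β : ℝ)
    (p : Sym2 V → ℝ) (hh : V → Fin q → ℝ) (F : Finset (Sym2 V)) :
    bern G p F * ∑ τ ∈ Finset.univ.filter (fun τ : V → Fin q =>
        ∀ i j, (openSub G F).Adj i j → τ i = τ j), ∏ i, Real.exp (β * hh i (τ i))
      = grcW G q β p hh F := by
  have key := sum_compat (openSub G F) (fun i r => Real.exp (β * hh i r))
  rw [key, grcW_eq]

lemma bern_mul_reach {q : ℕ} (G : SimpleGraph V) [DecidableRel G.Adj] (β : ℝ)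
    (p : Sym2 V → ℝ) (hh : V → Fin q → ℝ) (F : Finset (Sym2 V)) {x y : V}
    (hr : (openSub G F).Reachable x y) :
    bern G p F * ∑ τ ∈ Finset.univ.filter (fun τ : V → Fin q =>
        (∀ i j, (openSub G F).Adj i j → τ i = τ j) ∧ τ x = τ y),
        ∏ i, Real.exp (β * hh i (τ i))
      = grcW G q β p hh F := by
  rw [← bern_mul_full G β p hh F]
  congr 2
  refine Finset.filter_congr fun τ _ => ?_
  constructor
  · exact fun h => h.1
  · exact fun h => ⟨h, compat_of_reachable h hr⟩

lemma bern_mul_con {q : ℕ} (hq : 2 ≤ q) (G : SimpleGraph V) [DecidableRel G.Adj] (β : ℝ)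
    (p : Sym2 V → ℝ) (hh : V → Fin q → ℝ) (F : Finset (Sym2 V)) {x y : V}
    (hr : ¬ (openSub G F).Reachable x y) :
    bern G p F * ∑ τ ∈ Finset.univ.filter (fun τ : V → Fin q =>
        (∀ i j, (openSub G F).Adj i j → τ i = τ j) ∧ τ x = τ y),
        ∏ i, Real.exp (β * hh i (τ i))
      = grcW G q β p hh F * Hfun G q β hh F x y := by
  set H := openSub G F with hH
  have hne : H.connectedComponentMk x ≠ H.connectedComponentMk y :=
    fun h => hr (SimpleGraph.ConnectedComponent.exact h)
  set cx := H.connectedComponentMk x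
  set cy := H.connectedComponentMk y
  set S : H.ConnectedComponent → ℝ :=
    fun c => ∑ r : Fin q, Real.exp (β * ∑ i ∈ compSupp H c, hh i r) with hS
  have hSpos : ∀ c, 0 < S c := fun c => Spos hq β hh _
  -- rewrite the constrained sum
  have key := sum_compat_con H (fun i r => Real.exp (β * hh i r)) hne
  rw [key]
  -- identify the factors with exponentials of sums
  have hfc : ∀ (c : H.ConnectedComponent) (r : Fin q),
      ∏ i ∈ compSupp H c, Real.exp (β * hh i r)
        = Real.exp (β * ∑ i ∈ compSupp H c, hh i r) := by
    intro c r
    rw [Finset.mul_sum, Real.exp_sum]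
  -- grcW and Hfun
  have hgrc : grcW G q β p hh F = bern G p F * ∏ c, S c := rfl
  have hsplit : ∏ c, S c = S cx * S cy * ∏ c ∈ Finset.univ \ {cx, cy}, S c := by
    rw [← Finset.prod_sdiff (Finset.subset_univ ({cx, cy} : Finset H.ConnectedComponent)),
      Finset.prod_pair hne]
    ring
  have hHfun : Hfun G q β hh F x y
      = (∑ r : Fin q, Real.exp (β * ∑ i ∈ compSupp H cx, hh i r)
          * Real.exp (β * ∑ i ∈ compSupp H cy, hh i r)) / (S cx * S cy) := by
    unfold Hfun
    congr 1
    refine Finset.sum_congr rfl fun r _ => ?_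
    rw [Real.exp_add]
    rfl
  rw [hgrc, hsplit, hHfun]
  have h1 : (∑ r : Fin q, (∏ i ∈ compSupp H cx, Real.exp (β * hh i r)) *
      ∏ i ∈ compSupp H cy, Real.exp (β * hh i r))
      = ∑ r : Fin q, Real.exp (β * ∑ i ∈ compSupp H cx, hh i r)
          * Real.exp (β * ∑ i ∈ compSupp H cy, hh i r) := by
    refine Finset.sum_congr rfl fun r _ => ?_
    rw [hfc, hfc]
  have h2 : ∏ c ∈ Finset.univ \ {cx, cy}, (∑ r : Fin q,
      ∏ i ∈ compSupp H c, Real.exp (β * hh i r)) = ∏ c ∈ Finset.univ \ {cx, cy}, S c := by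
    refine Finset.prod_congr rfl fun c _ => Finset.sum_congr rfl fun r _ => hfc c r
  rw [h1, h2]
  have hx := (hSpos cx).ne'
  have hy := (hSpos cy).ne'
  field_simp

end Aux4
section Aux5
open scoped Classical

variable [Fintype V] [DecidableEq V]

lemma den_eq {q : ℕ} (G : SimpleGraph V) [DecidableRel G.Adj] (hq : 2 ≤ q) (β : ℝ)
    (J : Sym2 V → ℝ) (hh : V → Fin q → ℝ)
    (p : Sym2 V → ℝ) (hp : ∀ e, p e = 1 - Real.exp (-(q * β) * J e)) :
    ∑ τ : V → Fin q, pottsWq G q β J hh τ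
      = (∏ e ∈ G.edgeFinset, (1 - p e)⁻¹) *
        ∑ F ∈ G.edgeFinset.powerset, grcW G q β p hh F := by
  rw [Finset.sum_congr rfl (fun τ _ => pottsW_expand G hq β J hh p hp τ), ← Finset.mul_sum]
  congr 1
  rw [Finset.sum_comm]
  refine Finset.sum_congr rfl fun F hF => ?_
  rw [Finset.mem_powerset] at hF
  have h1 : ∀ τ : V → Fin q,
      (bern G p F * ∏ e ∈ F, eDelta τ e) * ∏ i, Real.exp (β * hh i (τ i))
      = bern G p F * (if (∀ i j, (openSub G F).Adj i j → τ i = τ j)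
          then (∏ i, Real.exp (β * hh i (τ i))) else 0) := by
    intro τ
    rw [delta_indicator G hF τ]
    by_cases h : ∀ i j, (openSub G F).Adj i j → τ i = τ j <;> simp [h]
  rw [Finset.sum_congr rfl (fun τ _ => h1 τ), ← Finset.mul_sum, ← Finset.sum_filter]
  exact bern_mul_full G β p hh F

lemma num_eq {q : ℕ} (G : SimpleGraph V) [DecidableRel G.Adj] (hq : 2 ≤ q) (β : ℝ)
    (J : Sym2 V → ℝ) (hh : V → Fin q → ℝ)
    (p : Sym2 V → ℝ) (hp : ∀ e, p e = 1 - Real.exp (-(q * β) * J e)) (x y : V) :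
    ∑ τ ∈ Finset.univ.filter (fun τ : V → Fin q => τ x = τ y), pottsWq G q β J hh τ
      = (∏ e ∈ G.edgeFinset, (1 - p e)⁻¹) *
        ∑ F ∈ G.edgeFinset.powerset, bern G p F *
          ∑ τ ∈ Finset.univ.filter (fun τ : V → Fin q =>
            (∀ i j, (openSub G F).Adj i j → τ i = τ j) ∧ τ x = τ y),
            ∏ i, Real.exp (β * hh i (τ i)) := by
  rw [Finset.sum_congr rfl (fun τ _ => pottsW_expand G hq β J hh p hp τ), ← Finset.mul_sum]
  congr 1
  rw [Finset.sum_comm]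
  refine Finset.sum_congr rfl fun F hF => ?_
  rw [Finset.mem_powerset] at hF
  have h1 : ∀ τ : V → Fin q,
      (bern G p F * ∏ e ∈ F, eDelta τ e) * ∏ i, Real.exp (β * hh i (τ i))
      = bern G p F * (if (∀ i j, (openSub G F).Adj i j → τ i = τ j)
          then (∏ i, Real.exp (β * hh i (τ i))) else 0) := by
    intro τ
    rw [delta_indicator G hF τ]
    by_cases h : ∀ i j, (openSub G F).Adj i j → τ i = τ j <;> simp [h]
  rw [Finset.sum_congr rfl (fun τ _ => h1 τ), ← Finset.mul_sum, ← Finset.sum_filter,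
    Finset.filter_filter]
  congr 2
  refine Finset.filter_congr fun τ _ => ?_
  exact and_comm

end Aux5
open scoped Classical in
/-- Proposition (general `q`-state correlation-connectivity identity). -/
theorem statement12 [Fintype V] [DecidableEq V]
    (G : SimpleGraph V) [DecidableRel G.Adj]
    (q : ℕ) (hq : 2 ≤ q) (β : ℝ) (hβ : 0 < β)
    (J : Sym2 V → ℝ) (hJ : ∀ e ∈ G.edgeFinset, 0 ≤ J e)
    (hh : V → Fin q → ℝ)
    (p : Sym2 V → ℝ) (hp : ∀ e, p e = 1 - Real.exp (-(q * β) * J e))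
    (x y : V) (hxy : x ≠ y) :
    (∑ τ ∈ Finset.univ.filter (fun τ : V → Fin q => τ x = τ y),
          pottsWq G q β J hh τ) / (∑ τ : V → Fin q, pottsWq G q β J hh τ) - 1 / q
      = (1 - 1 / q) * grcE G q β p hh
            (fun F => if (openSub G F).Reachable x y then 1 else 0)
        + grcE G q β p hh
            (fun F => (if ¬ (openSub G F).Reachable x y then 1 else 0) *
              (Hfun G q β hh F x y - 1 / q)) := by
  have hq0 : (q : ℝ) ≠ 0 := by
    have : 0 < q := by omega
    exact_mod_cast this.ne'
  set C := ∏ e ∈ G.edgeFinset, (1 - p e)⁻¹ with hC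
  have h1p : ∀ e, 0 < 1 - p e := by
    intro e
    rw [hp]
    have : 1 - (1 - Real.exp (-(q * β) * J e)) = Real.exp (-(q * β) * J e) := by ring
    rw [this]
    exact Real.exp_pos _
  have hCpos : 0 < C := Finset.prod_pos fun e _ => inv_pos.2 (h1p e)
  -- positivity of grcW
  have hgrc_nonneg : ∀ F ∈ G.edgeFinset.powerset, 0 ≤ grcW G q β p hh F := by
    intro F hF
    rw [Finset.mem_powerset] at hF
    refine mul_nonneg (mul_nonneg ?_ ?_) ?_
    · refine Finset.prod_nonneg fun e he => ?_
      rw [hp]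
      have hJe : 0 ≤ J e := hJ e (hF he)
      have : -(q * β) * J e ≤ 0 := by
        have h1 : 0 ≤ (q : ℝ) * β := mul_nonneg (by positivity) hβ.le
        nlinarith
      have := Real.exp_le_one_iff.mpr this
      linarith
    · exact Finset.prod_nonneg fun e _ => (h1p e).le
    · exact (Finset.prod_pos fun c _ => Spos hq β hh _).le
  have hSpos : 0 < ∑ F ∈ G.edgeFinset.powerset, grcW G q β p hh F := by
    refine Finset.sum_pos' hgrc_nonneg ⟨∅, Finset.empty_mem_powerset _, ?_⟩
    unfold grcW bern
    rw [Finset.prod_empty, Finset.sdiff_empty, one_mul]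
    exact mul_pos (Finset.prod_pos fun e _ => h1p e)
      (Finset.prod_pos fun c _ => Spos hq β hh _)
  set S := ∑ F ∈ G.edgeFinset.powerset, grcW G q β p hh F with hS
  -- per-configuration identity
  have hper : ∀ F ∈ G.edgeFinset.powerset,
      bern G p F * ∑ τ ∈ Finset.univ.filter (fun τ : V → Fin q =>
          (∀ i j, (openSub G F).Adj i j → τ i = τ j) ∧ τ x = τ y),
          ∏ i, Real.exp (β * hh i (τ i))
      = (1 - 1 / q) * ((if (openSub G F).Reachable x y then (1:ℝ) else 0) * grcW G q β p hh F)
        + ((if ¬ (openSub G F).Reachable x y then (1:ℝ) else 0) *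
            (Hfun G q β hh F x y - 1 / q)) * grcW G q β p hh F
        + (1 / q) * grcW G q β p hh F := by
    intro F _
    by_cases hr : (openSub G F).Reachable x y
    · rw [bern_mul_reach G β p hh F hr, if_pos hr, if_neg (not_not_intro hr)]
      ring
    · rw [bern_mul_con hq G β p hh F hr, if_neg hr, if_pos hr]
      ring
  have hNum := num_eq G hq β J hh p hp x y
  rw [Finset.sum_congr rfl hper] at hNum
  rw [hNum, den_eq G hq β J hh p hp]
  unfold grcE
  rw [← hC, ← hS]
  have hsum : ∑ F ∈ G.edgeFinset.powerset,
      ((1 - 1 / q) * ((if (openSub G F).Reachable x y then (1:ℝ) else 0) * grcW G q β p hh F)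
        + ((if ¬ (openSub G F).Reachable x y then (1:ℝ) else 0) *
            (Hfun G q β hh F x y - 1 / q)) * grcW G q β p hh F
        + (1 / q) * grcW G q β p hh F)
      = (1 - 1 / q) * (∑ F ∈ G.edgeFinset.powerset,
          (if (openSub G F).Reachable x y then (1:ℝ) else 0) * grcW G q β p hh F)
        + (∑ F ∈ G.edgeFinset.powerset,
            ((if ¬ (openSub G F).Reachable x y then (1:ℝ) else 0) *
              (Hfun G q β hh F x y - 1 / q)) * grcW G q β p hh F)
        + (1 / q) * S := by
    rw [Finset.sum_add_distrib, Finset.sum_add_distrib, ← Finset.mul_sum, ← Finset.mul_sum]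
  rw [hsum]
  set A := ∑ F ∈ G.edgeFinset.powerset,
      (if (openSub G F).Reachable x y then (1:ℝ) else 0) * grcW G q β p hh F with hA
  set B := ∑ F ∈ G.edgeFinset.powerset,
      ((if ¬ (openSub G F).Reachable x y then (1:ℝ) else 0) *
        (Hfun G q β hh F x y - 1 / q)) * grcW G q β p hh F with hB
  field_simp
  ring

end
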